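/- The number of orbits of G_{v0}(k) = {g ∈ GL_2(O) : g ≡ 1 mod ϖ^k} acting on P^1(F) by Möbius transformations equals q^k + q^{k−1} = (q+1)q^{k−1}. -/

import Mathlib

open Matrix Pointwise
open scoped OnePoint

noncomputable section

/-- `ϖ` is a uniformizer of the nonarchimedean field `F`. -/
def IsUniformizer (F : Type*) [NormedField F] (ϖ : F) : Prop :=
  ϖ ≠ 0 ∧ ‖ϖ‖ < 1 ∧ ∀ x : F, ‖x‖ < 1 → ‖x‖ ≤ ‖ϖ‖

/-- The principal congruence subgroup `G_{v₀}(k)` of level `k`: matrices in `GL₂(𝒪)`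
congruent to the identity modulo `ϖ^k` (entrywise, each entry of `g - 1` lies in `ϖ^k 𝒪`,
i.e. has norm at most `‖ϖ‖^k`). -/
def Gv0 (F : Type*) [NormedField F] (ϖ : F) (k : ℕ) : Set (GL (Fin 2) F) :=
  {g | ‖(g : Matrix (Fin 2) (Fin 2) F) 0 0 - 1‖ ≤ ‖ϖ‖ ^ k ∧
       ‖(g : Matrix (Fin 2) (Fin 2) F) 0 1‖ ≤ ‖ϖ‖ ^ k ∧
       ‖(g : Matrix (Fin 2) (Fin 2) F) 1 0‖ ≤ ‖ϖ‖ ^ k ∧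
       ‖(g : Matrix (Fin 2) (Fin 2) F) 1 1 - 1‖ ≤ ‖ϖ‖ ^ k}

/-- The diagonal matrix `diag(ϖ, 1)` as an element of `GL₂(F)`. -/
def dmat (F : Type*) [Field F] (ϖ : F) (h : ϖ ≠ 0) : GL (Fin 2) F :=
  Matrix.GeneralLinearGroup.mkOfDetNeZero !![ϖ, 0; 0, 1]
    (by simpa [Matrix.det_fin_two_of] using h)

/-- `G_{v₁}(k) = diag(ϖ,1) · G_{v₀}(k) · diag(ϖ,1)⁻¹`. -/
def Gv1 (F : Type*) [NormedField F] (ϖ : F) (h : ϖ ≠ 0) (k : ℕ) : Set (GL (Fin 2) F) :=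
  (fun g => dmat F ϖ h * g * (dmat F ϖ h)⁻¹) '' Gv0 F ϖ k

/-- The explicit set `H` of matrices `[[1+ϖ^k a, ϖ^k b],[ϖ^{k-1} c, 1+ϖ^k d]]`, `a,b,c,d ∈ 𝒪`;
this is the edge group `G_e(k)`. -/
def Ge (F : Type*) [NormedField F] (ϖ : F) (k : ℕ) : Set (GL (Fin 2) F) :=
  {g | ‖(g : Matrix (Fin 2) (Fin 2) F) 0 0 - 1‖ ≤ ‖ϖ‖ ^ k ∧
       ‖(g : Matrix (Fin 2) (Fin 2) F) 0 1‖ ≤ ‖ϖ‖ ^ k ∧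
       ‖(g : Matrix (Fin 2) (Fin 2) F) 1 0‖ ≤ ‖ϖ‖ ^ (k - 1) ∧
       ‖(g : Matrix (Fin 2) (Fin 2) F) 1 1 - 1‖ ≤ ‖ϖ‖ ^ k}

/-- The explicit description of `G_{v₁}(k)`: matrices
`[[1+ϖ^k a, ϖ^{k+1} b],[ϖ^{k-1} c, 1+ϖ^k d]]` with `a,b,c,d ∈ 𝒪`. -/
def Gv1ex (F : Type*) [NormedField F] (ϖ : F) (k : ℕ) : Set (GL (Fin 2) F) :=
  {g | ‖(g : Matrix (Fin 2) (Fin 2) F) 0 0 - 1‖ ≤ ‖ϖ‖ ^ k ∧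
       ‖(g : Matrix (Fin 2) (Fin 2) F) 0 1‖ ≤ ‖ϖ‖ ^ (k + 1) ∧
       ‖(g : Matrix (Fin 2) (Fin 2) F) 1 0‖ ≤ ‖ϖ‖ ^ (k - 1) ∧
       ‖(g : Matrix (Fin 2) (Fin 2) F) 1 1 - 1‖ ≤ ‖ϖ‖ ^ k}

open scoped Classical in
/-- The right Möbius action of `g = [[a,b],[c,d]]` on `ℙ¹(F) = F ∪ {∞}` (here modelled as
`Option F`, with `none = ∞`): `z·g = (az+c)/(bz+d)`, `∞·g = a/b`, with value `∞` when the
denominator vanishes. -/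
def moeb (F : Type*) [Field F] (g : Matrix (Fin 2) (Fin 2) F) : Option F → Option F
  | Option.some z => if g 0 1 * z + g 1 1 = 0 then Option.none
      else Option.some ((g 0 0 * z + g 1 0) / (g 0 1 * z + g 1 1))
  | Option.none => if g 0 1 = 0 then Option.none else Option.some (g 0 0 / g 0 1)

/-- The orbit of `z ∈ ℙ¹(F)` under a set `S` of elements of `GL₂(F)` acting on the right by
Möbius transformations. -/
def orb (F : Type*) [Field F] (S : Set (GL (Fin 2) F)) (z : Option F) : Set (Option F) :=
  {w | ∃ g ∈ S, moeb F (g : Matrix (Fin 2) (Fin 2) F) z = w}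

/-- `D` is an orbit of `S` on `ℙ¹(F)`. -/
def IsOrbit (F : Type*) [Field F] (S : Set (GL (Fin 2) F)) (D : Set (Option F)) : Prop :=
  ∃ z, D = orb F S z

/-- The region `B_w(∞, |ϖ|) = {w ∈ ℙ¹(F) : |1/w| ≤ |ϖ|} = {|w| ≥ |ϖ|⁻¹} ∪ {∞}`. -/
def regionInfty (F : Type*) [NormedField F] (ϖ : F) : Set (Option F) :=
  {w | w = Option.none ∨ ∃ z : F, w = Option.some z ∧ ‖ϖ‖⁻¹ ≤ ‖z‖}

/-- The coordinate `1/w` on `ℙ¹(F)`, with `1/∞ = 0`. -/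
def invc (F : Type*) [Field F] : Option F → F
  | Option.none => 0
  | Option.some z => z⁻¹

/-- The residue field of `F` has cardinality `q`: there are exactly `q` classes in
`𝒪/(ϖ)`, witnessed by a set of representatives. -/
def ResidueCard (F : Type*) [NormedField F] (ϖ : F) (q : ℕ) : Prop :=
  ∃ s : Finset F, s.card = q ∧ (∀ x ∈ s, ‖x‖ ≤ 1) ∧
    ∀ x : F, ‖x‖ ≤ 1 → ∃! y, y ∈ s ∧ ‖x - y‖ ≤ ‖ϖ‖

/-- The conjugate `h S h⁻¹` of a set of matrices. -/
def conjSet (F : Type*) [Field F] (h : GL (Fin 2) F) (S : Set (GL (Fin 2) F)) :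
    Set (GL (Fin 2) F) :=
  (fun g => h * g * h⁻¹) '' S

/-- The matrix `g_α = [[1,0],[α,ϖ]]` as an element of `GL₂(F)`. -/
def galpha (F : Type*) [Field F] (ϖ α : F) (h : ϖ ≠ 0) : GL (Fin 2) F :=
  Matrix.GeneralLinearGroup.mkOfDetNeZero !![1, 0; α, ϖ]
    (by simpa [Matrix.det_fin_two_of] using h)

/-- The diagonal matrix `diag(1, ϖ^n)` as an element of `GL₂(F)`. -/
def dmatN (F : Type*) [Field F] (ϖ : F) (h : ϖ ≠ 0) (n : ℕ) : GL (Fin 2) F :=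
  Matrix.GeneralLinearGroup.mkOfDetNeZero !![1, 0; 0, ϖ ^ n]
    (by simpa [Matrix.det_fin_two_of] using pow_ne_zero n h)


section Aux

open scoped Classical

variable {F : Type*} [NormedField F] [IsUltrametricDist F]

lemma St10.add_le {x y : F} {r : ℝ} (hx : ‖x‖ ≤ r) (hy : ‖y‖ ≤ r) : ‖x + y‖ ≤ r :=
  (IsUltrametricDist.norm_add_le_max x y).trans (max_le hx hy)

lemma St10.sub_le {x y : F} {r : ℝ} (hx : ‖x‖ ≤ r) (hy : ‖y‖ ≤ r) : ‖x - y‖ ≤ r := by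
  rw [sub_eq_add_neg]; exact St10.add_le hx (by simpa using hy)

lemma St10.norm_one_add {x : F} (h : ‖x‖ < 1) : ‖1 + x‖ = 1 := by
  have h1 : ‖(1 : F) + x‖ ≤ 1 := (IsUltrametricDist.norm_add_le_max 1 x).trans (by simp [h.le])
  have h2 : (1 : ℝ) ≤ max ‖(1 : F) + x‖ ‖x‖ := by
    have := IsUltrametricDist.norm_add_le_max ((1 : F) + x) (-x)
    simpa using this
  rcases le_max_iff.mp h2 with h' | h'
  · linarith
  · linarith

lemma St10.mul_le {a b : F} {r : ℝ} (ha : ‖a‖ ≤ r) (hb : ‖b‖ ≤ 1) : ‖a * b‖ ≤ r := by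
  rw [norm_mul]
  calc ‖a‖ * ‖b‖ ≤ r * 1 :=
        mul_le_mul ha hb (norm_nonneg _) ((norm_nonneg a).trans ha)
    _ = r := mul_one r

/-- Representatives of `𝒪/ϖ^k`. -/
lemma St10.reps (ϖ : F) (hne : ϖ ≠ 0) (hlt : ‖ϖ‖ < 1)
    (s : Finset F) (hle : ∀ x ∈ s, ‖x‖ ≤ 1)
    (hrep : ∀ x : F, ‖x‖ ≤ 1 → ∃! y, y ∈ s ∧ ‖x - y‖ ≤ ‖ϖ‖) (k : ℕ) :
    ∃ T : Finset F, T.card = s.card ^ k ∧ (∀ x ∈ T, ‖x‖ ≤ 1) ∧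
      ∀ x : F, ‖x‖ ≤ 1 → ∃! t, t ∈ T ∧ ‖x - t‖ ≤ ‖ϖ‖ ^ k := by
  have hpos : 0 < ‖ϖ‖ := norm_pos_iff.mpr hne
  induction k with
  | zero =>
    exact ⟨{0}, by simp, by simp, fun x hx =>
      ⟨0, ⟨by simp, by simpa using hx⟩, fun y hy => by simpa using hy.1⟩⟩
  | succ k ih =>
    obtain ⟨T, hTcard, hTle, hTrep⟩ := ih
    have hinj : Set.InjOn (fun p : F × F => p.1 + ϖ * p.2) ↑(s ×ˢ T) := by
      rintro ⟨y, t⟩ hyt ⟨y', t'⟩ hyt' hEq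
      simp only [Finset.coe_product, Set.mem_prod, Finset.mem_coe] at hyt hyt'
      simp only at hEq
      have hyy' : ‖y - y'‖ ≤ ‖ϖ‖ := by
        have hdiff : y - y' = ϖ * (t' - t) := by linear_combination hEq
        rw [hdiff]
        exact St10.mul_le le_rfl (St10.sub_le (hTle _ hyt'.2) (hTle _ hyt.2))
      have hy1 : y ∈ s ∧ ‖y - y‖ ≤ ‖ϖ‖ := ⟨hyt.1, by simp [hpos.le]⟩
      have hy2 : y' ∈ s ∧ ‖y - y'‖ ≤ ‖ϖ‖ := ⟨hyt'.1, hyy'⟩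
      have hyeq : y = y' := (hrep y (hle _ hyt.1)).unique hy1 hy2
      subst hyeq
      have htteq : t = t' := mul_left_cancel₀ hne (by linear_combination hEq)
      simp [htteq]
    refine ⟨(s ×ˢ T).image (fun p => p.1 + ϖ * p.2), ?_, ?_, ?_⟩
    · rw [Finset.card_image_of_injOn hinj, Finset.card_product, hTcard, pow_succ]
      ring
    · intro x hx
      simp only [Finset.mem_image, Finset.mem_product] at hx
      obtain ⟨⟨y, t⟩, ⟨hy, ht⟩, rfl⟩ := hx
      exact St10.add_le (hle _ hy) (St10.mul_le hlt.le (hTle _ ht))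
    · intro x hx
      obtain ⟨y, ⟨hys, hyc⟩, hyu⟩ := hrep x hx
      have hx' : ‖(x - y) / ϖ‖ ≤ 1 := by
        rw [norm_div, div_le_one hpos]; exact hyc
      obtain ⟨t, ⟨hts, htc⟩, htu⟩ := hTrep ((x - y) / ϖ) hx'
      refine ⟨y + ϖ * t, ⟨?_, ?_⟩, ?_⟩
      · exact Finset.mem_image.mpr ⟨(y, t), Finset.mem_product.mpr ⟨hys, hts⟩, rfl⟩
      · have : x - (y + ϖ * t) = ϖ * ((x - y) / ϖ - t) := by field_simp; ring
        rw [this, norm_mul, pow_succ, mul_comm (‖ϖ‖ ^ k) ‖ϖ‖]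
        exact mul_le_mul_of_nonneg_left htc hpos.le
      · rintro t' ⟨ht'mem, ht'c⟩
        obtain ⟨⟨y₁, t₁⟩, h1, rfl⟩ := Finset.mem_image.mp ht'mem
        obtain ⟨hy₁, ht₁⟩ := Finset.mem_product.mp h1
        have hxy₁ : ‖x - y₁‖ ≤ ‖ϖ‖ := by
          have hdiff : x - y₁ = (x - (y₁ + ϖ * t₁)) + ϖ * t₁ := by ring
          rw [hdiff]
          refine St10.add_le (ht'c.trans ?_) (St10.mul_le le_rfl (hTle _ ht₁))
          calc ‖ϖ‖ ^ (k + 1) ≤ ‖ϖ‖ ^ 1 :=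
                pow_le_pow_of_le_one hpos.le hlt.le (Nat.succ_le_succ (Nat.zero_le k))
            _ = ‖ϖ‖ := pow_one _
        have hy₁y : y₁ = y := hyu y₁ ⟨hy₁, hxy₁⟩
        subst hy₁y
        have ht₁c : ‖(x - y₁) / ϖ - t₁‖ ≤ ‖ϖ‖ ^ k := by
          have hdiff : (x - y₁) / ϖ - t₁ = (x - (y₁ + ϖ * t₁)) / ϖ := by field_simp; ring
          rw [hdiff, norm_div, div_le_iff₀ hpos]
          calc ‖x - (y₁ + ϖ * t₁)‖ ≤ ‖ϖ‖ ^ (k + 1) := ht'c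
            _ = ‖ϖ‖ ^ k * ‖ϖ‖ := by rw [pow_succ]
        have : t₁ = t := htu t₁ ⟨ht₁, ht₁c⟩
        rw [this]

/-- Separation property of a representative set. -/
lemma St10.sep {ϖ : F} {T : Finset F} {k : ℕ}
    (hTle : ∀ x ∈ T, ‖x‖ ≤ 1)
    (hTrep : ∀ x : F, ‖x‖ ≤ 1 → ∃! t, t ∈ T ∧ ‖x - t‖ ≤ ‖ϖ‖ ^ k)
    {t t' : F} (ht : t ∈ T) (ht' : t' ∈ T) (h : ‖t - t'‖ ≤ ‖ϖ‖ ^ k) : t = t' :=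
  (hTrep t (hTle _ ht)).unique ⟨ht, by simp [pow_nonneg (norm_nonneg ϖ) k]⟩ ⟨ht', h⟩

/-- The lower-triangular unipotent matrix `[[1,0],[t,1]]`. -/
noncomputable def St10.lmat (F : Type*) [Field F] (t : F) : GL (Fin 2) F :=
  Matrix.GeneralLinearGroup.mkOfDetNeZero !![1, 0; t, 1] (by simp [Matrix.det_fin_two_of])

/-- The upper-triangular unipotent matrix `[[1,t],[0,1]]`. -/
noncomputable def St10.umat (F : Type*) [Field F] (t : F) : GL (Fin 2) F :=
  Matrix.GeneralLinearGroup.mkOfDetNeZero !![1, t; 0, 1] (by simp [Matrix.det_fin_two_of])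

lemma St10.lmat_coe (t : F) : (St10.lmat F t : Matrix (Fin 2) (Fin 2) F) = !![1, 0; t, 1] := rfl
lemma St10.umat_coe (t : F) : (St10.umat F t : Matrix (Fin 2) (Fin 2) F) = !![1, t; 0, 1] := rfl

section Uniformizer

variable {ϖ : F} (hu : IsUniformizer F ϖ) {k : ℕ} (hk : 1 ≤ k)
include hu

lemma St10.wpos : 0 < ‖ϖ‖ := norm_pos_iff.mpr hu.1

include hk in
lemma St10.eps_le : ‖ϖ‖ ^ k ≤ ‖ϖ‖ := by
  calc ‖ϖ‖ ^ k ≤ ‖ϖ‖ ^ 1 := pow_le_pow_of_le_one (St10.wpos hu).le hu.2.1.le hk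
    _ = ‖ϖ‖ := pow_one _

include hk in
lemma St10.eps_lt_one : ‖ϖ‖ ^ k < 1 := by
  calc ‖ϖ‖ ^ k ≤ ‖ϖ‖ := St10.eps_le hu hk
    _ < 1 := hu.2.1

omit hu in
lemma St10.invc_none : invc F (none : Option F) = 0 := rfl
omit hu in
lemma St10.invc_some (x : F) : invc F (some x) = x⁻¹ := rfl

lemma St10.region_ne_zero {x : F} (hx : some x ∈ regionInfty F ϖ) : x ≠ 0 ∧ ‖ϖ‖⁻¹ ≤ ‖x‖ := by
  rcases hx with h | ⟨z, hz, hzn⟩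
  · exact absurd h (by simp)
  · obtain rfl : x = z := by injection hz
    refine ⟨?_, hzn⟩
    intro h0
    rw [h0] at hzn
    simp only [norm_zero] at hzn
    exact absurd hzn (not_le.mpr (inv_pos.mpr (St10.wpos hu)))

lemma St10.invc_le {z : Option F} (hz : z ∈ regionInfty F ϖ) : ‖invc F z‖ ≤ ‖ϖ‖ := by
  match z with
  | none => simp [St10.invc_none, (St10.wpos hu).le]
  | some x =>
    obtain ⟨hx0, hxn⟩ := St10.region_ne_zero hu hz
    rw [St10.invc_some, norm_inv]
    exact inv_le_of_inv_le₀ (St10.wpos hu) hxn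

lemma St10.invc_inj {w w' : Option F} (hw : w ∈ regionInfty F ϖ) (hw' : w' ∈ regionInfty F ϖ)
    (h : invc F w = invc F w') : w = w' := by
  match w, w' with
  | none, none => rfl
  | none, some y =>
    obtain ⟨hy0, -⟩ := St10.region_ne_zero hu hw'
    rw [St10.invc_none, St10.invc_some] at h
    exact absurd h.symm (inv_ne_zero hy0)
  | some x, none =>
    obtain ⟨hx0, -⟩ := St10.region_ne_zero hu hw
    rw [St10.invc_none, St10.invc_some] at h
    exact absurd h (inv_ne_zero hx0)
  | some x, some y =>
    obtain ⟨hx0, -⟩ := St10.region_ne_zero hu hw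
    obtain ⟨hy0, -⟩ := St10.region_ne_zero hu hw'
    rw [St10.invc_some, St10.invc_some] at h
    rw [inv_inj.mp h]

lemma St10.mem_region_of_inv {y : F} (hy : y ≠ 0) (h : ‖y⁻¹‖ ≤ ‖ϖ‖) :
    some y ∈ regionInfty F ϖ := by
  refine Or.inr ⟨y, rfl, ?_⟩
  have : ‖y⁻¹‖⁻¹ ≤ ‖y‖ := by rw [norm_inv, inv_inv]
  refine le_trans ?_ this
  exact inv_anti₀ (norm_pos_iff.mpr (inv_ne_zero hy)) h

/-- Membership of unipotent matrices in `Gv0`. -/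
lemma St10.lmat_mem {t : F} (ht : ‖t‖ ≤ ‖ϖ‖ ^ k) : St10.lmat F t ∈ Gv0 F ϖ k := by
  have h0 : (0:ℝ) ≤ ‖ϖ‖ ^ k := pow_nonneg (norm_nonneg ϖ) k
  refine ⟨?_, ?_, ?_, ?_⟩ <;> rw [St10.lmat_coe] <;> simp [h0, ht]

lemma St10.umat_mem {t : F} (ht : ‖t‖ ≤ ‖ϖ‖ ^ k) : St10.umat F t ∈ Gv0 F ϖ k := by
  have h0 : (0:ℝ) ≤ ‖ϖ‖ ^ k := pow_nonneg (norm_nonneg ϖ) k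
  refine ⟨?_, ?_, ?_, ?_⟩ <;> rw [St10.umat_coe] <;> simp [h0, ht]

include hk in
/-- Orbit of a point of the closed unit ball. -/
lemma St10.orb_fin {x : F} (hx : ‖x‖ ≤ 1) :
    orb F (Gv0 F ϖ k) (some x) = {w | ∃ y, w = some y ∧ ‖y - x‖ ≤ ‖ϖ‖ ^ k} := by
  have hεpos : (0:ℝ) ≤ ‖ϖ‖ ^ k := pow_nonneg (norm_nonneg ϖ) k
  have hεlt : ‖ϖ‖ ^ k < 1 := St10.eps_lt_one hu hk
  ext w
  constructor
  · rintro ⟨g, ⟨hA, hB, hC, hD⟩, rfl⟩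
    set M := (g : Matrix (Fin 2) (Fin 2) F) with hM
    have hBx : ‖M 0 1 * x‖ ≤ ‖ϖ‖ ^ k := St10.mul_le hB hx
    have hden1 : ‖M 0 1 * x + M 1 1‖ = 1 := by
      have h1 : M 0 1 * x + M 1 1 = 1 + (M 0 1 * x + (M 1 1 - 1)) := by ring
      rw [h1]
      exact St10.norm_one_add (lt_of_le_of_lt (St10.add_le hBx hD) hεlt)
    have hden : M 0 1 * x + M 1 1 ≠ 0 := by
      intro h0; rw [h0] at hden1; simp at hden1
    rw [moeb, if_neg hden]
    refine ⟨_, rfl, ?_⟩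
    have hkey : (M 0 0 * x + M 1 0) / (M 0 1 * x + M 1 1) - x =
        ((M 0 0 - 1) * x + M 1 0 - M 0 1 * (x * x) - (M 1 1 - 1) * x) /
          (M 0 1 * x + M 1 1) := by
      rw [eq_div_iff hden, sub_mul, div_mul_cancel₀ _ hden]
      ring
    rw [hkey, norm_div, hden1, div_one]
    have hxx : ‖x * x‖ ≤ 1 := St10.mul_le hx hx
    refine St10.sub_le (St10.sub_le (St10.add_le (St10.mul_le hA hx) hC)
      (St10.mul_le hB hxx)) (St10.mul_le hD hx)
  · rintro ⟨y, rfl, hy⟩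
    refine ⟨St10.lmat F (y - x), St10.lmat_mem hu hy, ?_⟩
    rw [St10.lmat_coe, moeb]
    rw [if_neg (by simp)]
    simp

include hk in
/-- Forward inclusion for the orbit of a point of the region at infinity. -/
lemma St10.moeb_mem_inf {g : GL (Fin 2) F} (hg : g ∈ Gv0 F ϖ k)
    {z : Option F} (hz : z ∈ regionInfty F ϖ) :
    moeb F (g : Matrix (Fin 2) (Fin 2) F) z ∈ regionInfty F ϖ ∧
      ‖invc F (moeb F (g : Matrix (Fin 2) (Fin 2) F) z) - invc F z‖ ≤ ‖ϖ‖ ^ k := by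
  obtain ⟨hA, hB, hC, hD⟩ := hg
  set M := (g : Matrix (Fin 2) (Fin 2) F) with hM
  have hεpos : (0:ℝ) ≤ ‖ϖ‖ ^ k := pow_nonneg (norm_nonneg ϖ) k
  have hεle : ‖ϖ‖ ^ k ≤ ‖ϖ‖ := St10.eps_le hu hk
  have hεlt : ‖ϖ‖ ^ k < 1 := St10.eps_lt_one hu hk
  have hnA : ‖M 0 0‖ = 1 := by
    have h1 : M 0 0 = 1 + (M 0 0 - 1) := by ring
    rw [h1]; exact St10.norm_one_add (lt_of_le_of_lt hA hεlt)
  have hnD : ‖M 1 1‖ = 1 := by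
    have h1 : M 1 1 = 1 + (M 1 1 - 1) := by ring
    rw [h1]; exact St10.norm_one_add (lt_of_le_of_lt hD hεlt)
  have hA0 : M 0 0 ≠ 0 := by intro h0; rw [h0] at hnA; simp at hnA
  match z with
  | none =>
    rw [moeb]
    by_cases hB0 : M 0 1 = 0
    · rw [if_pos hB0]
      exact ⟨Or.inl rfl, by simp [St10.invc_none, hεpos]⟩
    · rw [if_neg hB0]
      have hBpos : 0 < ‖M 0 1‖ := norm_pos_iff.mpr hB0
      have hfrac : ‖(M 0 0 / M 0 1)⁻¹‖ ≤ ‖ϖ‖ ^ k := by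
        rw [inv_div, norm_div, hnA, div_one]; exact hB
      constructor
      · refine St10.mem_region_of_inv hu (div_ne_zero hA0 hB0) (hfrac.trans hεle)
      · rw [St10.invc_some, St10.invc_none, sub_zero]
        exact hfrac
  | some x =>
    obtain ⟨hx0, hxn⟩ := St10.region_ne_zero hu hz
    set u := x⁻¹ with hu_def
    have hun : ‖u‖ ≤ ‖ϖ‖ := by
      rw [hu_def, norm_inv]; exact inv_le_of_inv_le₀ (St10.wpos hu) hxn
    have hun1 : ‖u‖ ≤ 1 := hun.trans hu.2.1.le
    have hxu : x * u = 1 := mul_inv_cancel₀ hx0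
    have hnT : ‖M 0 0 + M 1 0 * u‖ = 1 := by
      have h1 : M 0 0 + M 1 0 * u = 1 + ((M 0 0 - 1) + M 1 0 * u) := by ring
      rw [h1]
      exact St10.norm_one_add (lt_of_le_of_lt (St10.add_le hA (St10.mul_le hC hun1)) hεlt)
    have hT0 : M 0 0 + M 1 0 * u ≠ 0 := by intro h0; rw [h0] at hnT; simp at hnT
    have hden_eq : M 0 1 * x + M 1 1 = x * (M 0 1 + M 1 1 * u) := by
      linear_combination (-(M 1 1)) * hxu
    rw [moeb]
    by_cases hden : M 0 1 * x + M 1 1 = 0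
    · rw [if_pos hden]
      have hS0 : M 0 1 + M 1 1 * u = 0 := by
        rcases mul_eq_zero.mp (hden_eq ▸ hden) with h | h
        · exact absurd h hx0
        · exact h
      have huB : ‖u‖ ≤ ‖ϖ‖ ^ k := by
        have : M 1 1 * u = -(M 0 1) := by linear_combination hS0
        have h2 : ‖M 1 1 * u‖ ≤ ‖ϖ‖ ^ k := by rw [this, norm_neg]; exact hB
        rwa [norm_mul, hnD, one_mul] at h2
      refine ⟨Or.inl rfl, ?_⟩
      rw [St10.invc_none, St10.invc_some, zero_sub, norm_neg]
      exact huB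
    · rw [if_neg hden]
      have hS0 : M 0 1 + M 1 1 * u ≠ 0 := by
        intro h0; exact hden (by rw [hden_eq, h0, mul_zero])
      have hnS : ‖M 0 1 + M 1 1 * u‖ ≤ ‖ϖ‖ :=
        St10.add_le (hB.trans hεle) (by rw [norm_mul, hnD, one_mul]; exact hun)
      have hval : (M 0 0 * x + M 1 0) / (M 0 1 * x + M 1 1) =
          (M 0 0 + M 1 0 * u) / (M 0 1 + M 1 1 * u) := by
        rw [hden_eq]
        have hnum_eq : M 0 0 * x + M 1 0 = x * (M 0 0 + M 1 0 * u) := by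
          linear_combination (-(M 1 0)) * hxu
        rw [hnum_eq, mul_div_mul_left _ _ hx0]
      rw [hval]
      have hy0 : (M 0 0 + M 1 0 * u) / (M 0 1 + M 1 1 * u) ≠ 0 := div_ne_zero hT0 hS0
      have hyinv : ((M 0 0 + M 1 0 * u) / (M 0 1 + M 1 1 * u))⁻¹ =
          (M 0 1 + M 1 1 * u) / (M 0 0 + M 1 0 * u) := by rw [inv_div]
      constructor
      · refine St10.mem_region_of_inv hu hy0 ?_
        rw [hyinv, norm_div, hnT, div_one]
        exact hnS
      · have hix : invc F (some x) = u := by rw [St10.invc_some, hu_def]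
        rw [hix, St10.invc_some, hyinv]
        have hkey : (M 0 1 + M 1 1 * u) / (M 0 0 + M 1 0 * u) - u =
            (M 0 1 + (M 1 1 - 1) * u - (M 0 0 - 1) * u - M 1 0 * (u * u)) /
              (M 0 0 + M 1 0 * u) := by
          rw [eq_div_iff hT0, sub_mul, div_mul_cancel₀ _ hT0]
          ring
        rw [hkey, norm_div, hnT, div_one]
        have huu : ‖u * u‖ ≤ 1 := St10.mul_le hun1 hun1
        exact St10.sub_le (St10.sub_le (St10.add_le hB (St10.mul_le hD hun1))
          (St10.mul_le hA hun1)) (St10.mul_le hC huu)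

include hk in
/-- Backward inclusion for the orbit of a point of the region at infinity. -/
lemma St10.mem_orb_inf {z : Option F} (hz : z ∈ regionInfty F ϖ)
    {w : Option F} (hw : w ∈ regionInfty F ϖ)
    (hd : ‖invc F w - invc F z‖ ≤ ‖ϖ‖ ^ k) : w ∈ orb F (Gv0 F ϖ k) z := by
  have hεle : ‖ϖ‖ ^ k ≤ ‖ϖ‖ := St10.eps_le hu hk
  set t := invc F w - invc F z with ht_def
  refine ⟨St10.umat F t, St10.umat_mem hu hd, ?_⟩
  rw [St10.umat_coe]
  have htϖ : ‖t‖ ≤ ‖ϖ‖ := hd.trans hεle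
  match z with
  | none =>
    have ht_eq : t = invc F w := by rw [ht_def, St10.invc_none, sub_zero]
    rw [moeb]
    by_cases ht0 : t = 0
    · have : !![(1:F), t; 0, 1] 0 1 = t := by simp
      rw [if_pos (by simpa [this] using ht0)]
      refine St10.invc_inj hu (Or.inl rfl) hw ?_
      rw [St10.invc_none, ← ht_eq, ht0]
    · have hcond : ¬ (!![(1:F), t; 0, 1] 0 1 = 0) := by simpa using ht0
      rw [if_neg hcond]
      have hval : !![(1:F), t; 0, 1] 0 0 / !![(1:F), t; 0, 1] 0 1 = t⁻¹ := by
        simp [one_div]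
      rw [hval]
      have hmem : some t⁻¹ ∈ regionInfty F ϖ :=
        St10.mem_region_of_inv hu (inv_ne_zero ht0) (by rwa [inv_inv])
      refine St10.invc_inj hu hmem hw ?_
      rw [St10.invc_some, inv_inv, ht_eq]
  | some x =>
    obtain ⟨hx0, hxn⟩ := St10.region_ne_zero hu hz
    have hxu : x * x⁻¹ = 1 := mul_inv_cancel₀ hx0
    have hden_eq : !![(1:F), t; 0, 1] 0 1 * x + !![(1:F), t; 0, 1] 1 1 = x * invc F w := by
      have h1 : !![(1:F), t; 0, 1] 0 1 = t := by simp
      have h2 : !![(1:F), t; 0, 1] 1 1 = 1 := by simp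
      rw [h1, h2, ht_def, St10.invc_some]
      field_simp
      ring
    rw [moeb]
    by_cases hw0 : invc F w = 0
    · rw [if_pos (by rw [hden_eq, hw0, mul_zero])]
      refine St10.invc_inj hu (Or.inl rfl) hw ?_
      rw [St10.invc_none, hw0]
    · have hdne : ¬ (!![(1:F), t; 0, 1] 0 1 * x + !![(1:F), t; 0, 1] 1 1 = 0) := by
        rw [hden_eq]; exact mul_ne_zero hx0 hw0
      rw [if_neg hdne]
      have hval : (!![(1:F), t; 0, 1] 0 0 * x + !![(1:F), t; 0, 1] 1 0) /
          (!![(1:F), t; 0, 1] 0 1 * x + !![(1:F), t; 0, 1] 1 1) = (invc F w)⁻¹ := by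
        have h1 : !![(1:F), t; 0, 1] 0 0 = 1 := by simp
        have h2 : !![(1:F), t; 0, 1] 1 0 = 0 := by simp
        rw [h1, h2, hden_eq, one_mul, add_zero]
        field_simp
      rw [hval]
      have hwinv : ‖invc F w‖ ≤ ‖ϖ‖ := St10.invc_le hu hw
      have hmem : some (invc F w)⁻¹ ∈ regionInfty F ϖ :=
        St10.mem_region_of_inv hu (inv_ne_zero hw0) (by rwa [inv_inv])
      refine St10.invc_inj hu hmem hw ?_
      rw [St10.invc_some, inv_inv]

include hk in
/-- Orbit of a point of the region at infinity. -/
lemma St10.orb_inf {z : Option F} (hz : z ∈ regionInfty F ϖ) :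
    orb F (Gv0 F ϖ k) z =
      {w | w ∈ regionInfty F ϖ ∧ ‖invc F w - invc F z‖ ≤ ‖ϖ‖ ^ k} := by
  ext w
  constructor
  · rintro ⟨g, hg, rfl⟩
    exact St10.moeb_mem_inf hu hk hg hz
  · rintro ⟨hw, hd⟩
    exact St10.mem_orb_inf hu hk hz hw hd

include hk in
lemma St10.dichotomy (z : Option F) :
    (∃ x : F, z = some x ∧ ‖x‖ ≤ 1) ∨ z ∈ regionInfty F ϖ := by
  match z with
  | none => exact Or.inr (Or.inl rfl)
  | some x =>
    by_cases hx : ‖x‖ ≤ 1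
    · exact Or.inl ⟨x, rfl, hx⟩
    · push_neg at hx
      have hx0 : x ≠ 0 := by intro h0; rw [h0] at hx; simp at hx; linarith
      have hxin : ‖x⁻¹‖ < 1 := by
        rw [norm_inv]
        exact inv_lt_one_of_one_lt₀ hx
      have := hu.2.2 _ hxin
      refine Or.inr (Or.inr ⟨x, rfl, ?_⟩)
      have h2 : ‖x⁻¹‖⁻¹ ≤ ‖x‖ := by rw [norm_inv, inv_inv]
      refine le_trans ?_ h2
      refine inv_anti₀ ?_ this
      rw [norm_inv]
      positivity

end Uniformizer

end Aux


lemma St10.close {F : Type*} [NormedField F] [IsUltrametricDist F] {a b c : F} {e : ℝ}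
    (h1 : ‖a - b‖ ≤ e) (h2 : ‖b - c‖ ≤ e) : ‖a - c‖ ≤ e := by
  have h : a - c = (a - b) + (b - c) := by ring
  rw [h]; exact St10.add_le h1 h2

theorem statement10 (p : ℕ) [Fact p.Prime] (F : Type*) [NontriviallyNormedField F]
    [IsUltrametricDist F] [NormedAlgebra ℚ_[p] F] [FiniteDimensional ℚ_[p] F]
    (ϖ : F) (hϖ : IsUniformizer F ϖ) (q : ℕ) (hq : ResidueCard F ϖ q)
    (k : ℕ) (hk : 1 ≤ k) :
    Nat.card {D : Set (Option F) // IsOrbit F (Gv0 F ϖ k) D} = q ^ k + q ^ (k - 1) := by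
  classical
  have hne : ϖ ≠ 0 := hϖ.1
  have hwpos : 0 < ‖ϖ‖ := norm_pos_iff.mpr hne
  have hεpos : (0:ℝ) ≤ ‖ϖ‖ ^ k := pow_nonneg (norm_nonneg ϖ) k
  have hks : k - 1 + 1 = k := Nat.succ_pred_eq_of_pos hk
  have hpowsplit : ‖ϖ‖ ^ k = ‖ϖ‖ * ‖ϖ‖ ^ (k - 1) := by
    rw [← pow_succ', hks]
  obtain ⟨s, hscard, hsle, hsrep⟩ := hq
  obtain ⟨Tk, hTkcard, hTkle, hTkrep⟩ := St10.reps ϖ hne hϖ.2.1 s hsle hsrep k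
  obtain ⟨T1, hT1card, hT1le, hT1rep⟩ := St10.reps ϖ hne hϖ.2.1 s hsle hsrep (k - 1)
  set pt : F → Option F := fun t => if ϖ * t = 0 then none else some (ϖ * t)⁻¹ with hpt
  have hpt_invc : ∀ t : F, invc F (pt t) = ϖ * t := by
    intro t
    by_cases h0 : ϖ * t = 0
    · simp only [hpt, if_pos h0]
      rw [St10.invc_none, h0]
    · simp only [hpt, if_neg h0]
      rw [St10.invc_some, inv_inv]
  have hpt_mem : ∀ t : F, ‖t‖ ≤ 1 → pt t ∈ regionInfty F ϖ := by
    intro t ht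
    by_cases h0 : ϖ * t = 0
    · simp only [hpt, if_pos h0]; exact Or.inl rfl
    · simp only [hpt, if_neg h0]
      refine St10.mem_region_of_inv hϖ (inv_ne_zero h0) ?_
      rw [inv_inv]
      exact St10.mul_le le_rfl ht
  set f : ↥Tk ⊕ ↥T1 → {D : Set (Option F) // IsOrbit F (Gv0 F ϖ k) D} :=
    Sum.elim (fun t => ⟨orb F (Gv0 F ϖ k) (some (t : F)), (some (t : F)), rfl⟩)
             (fun t => ⟨orb F (Gv0 F ϖ k) (pt (t : F)), pt (t : F), rfl⟩) with hf
  have hfin : ∀ t : F, ‖t‖ ≤ 1 →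
      orb F (Gv0 F ϖ k) (some t) = {w | ∃ y, w = some y ∧ ‖y - t‖ ≤ ‖ϖ‖ ^ k} :=
    fun t ht => St10.orb_fin hϖ hk ht
  have hinf : ∀ z : Option F, z ∈ regionInfty F ϖ →
      orb F (Gv0 F ϖ k) z =
        {w | w ∈ regionInfty F ϖ ∧ ‖invc F w - invc F z‖ ≤ ‖ϖ‖ ^ k} :=
    fun z hz => St10.orb_inf hϖ hk hz
  have hnotreg : ∀ t : F, ‖t‖ ≤ 1 → some t ∉ regionInfty F ϖ := by
    intro t ht hmem
    obtain ⟨-, hlow⟩ := St10.region_ne_zero hϖ hmem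
    have h1 : (1:ℝ) < ‖ϖ‖⁻¹ := one_lt_inv₀ hwpos |>.mpr hϖ.2.1
    linarith
  have hbij : Function.Bijective f := by
    constructor
    · rintro (t | t) (t' | t') hab
      · have h1 := congrArg Subtype.val hab
        simp only [hf, Sum.elim_inl] at h1
        rw [hfin _ (hTkle _ t.2), hfin _ (hTkle _ t'.2)] at h1
        have hm : some (t : F) ∈ {w : Option F | ∃ y, w = some y ∧ ‖y - (t' : F)‖ ≤ ‖ϖ‖ ^ k} := by
          rw [← h1]; exact ⟨_, rfl, by simp [hεpos]⟩
        obtain ⟨y, hy, hyc⟩ := hm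
        obtain rfl : (t : F) = y := by injection hy
        have heq : (t : F) = (t' : F) := St10.sep hTkle hTkrep t.2 t'.2 hyc
        exact congrArg Sum.inl (Subtype.ext heq)
      · exfalso
        have h1 := congrArg Subtype.val hab
        simp only [hf, Sum.elim_inl, Sum.elim_inr] at h1
        rw [hfin _ (hTkle _ t.2), hinf _ (hpt_mem _ (hT1le _ t'.2))] at h1
        have hm : some (t : F) ∈ {w : Option F | ∃ y, w = some y ∧ ‖y - (t : F)‖ ≤ ‖ϖ‖ ^ k} :=
          ⟨_, rfl, by simp [hεpos]⟩
        rw [h1] at hm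
        exact hnotreg _ (hTkle _ t.2) hm.1
      · exfalso
        have h1 := congrArg Subtype.val hab
        simp only [hf, Sum.elim_inl, Sum.elim_inr] at h1
        rw [hfin _ (hTkle _ t'.2), hinf _ (hpt_mem _ (hT1le _ t.2))] at h1
        have hm : some (t' : F) ∈ {w : Option F | ∃ y, w = some y ∧ ‖y - (t' : F)‖ ≤ ‖ϖ‖ ^ k} :=
          ⟨_, rfl, by simp [hεpos]⟩
        rw [← h1] at hm
        exact hnotreg _ (hTkle _ t'.2) hm.1
      · have h1 := congrArg Subtype.val hab
        simp only [hf, Sum.elim_inr] at h1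
        rw [hinf _ (hpt_mem _ (hT1le _ t.2)), hinf _ (hpt_mem _ (hT1le _ t'.2))] at h1
        have hm : pt (t : F) ∈ {w : Option F | w ∈ regionInfty F ϖ ∧
            ‖invc F w - invc F (pt (t' : F))‖ ≤ ‖ϖ‖ ^ k} := by
          rw [← h1]; exact ⟨hpt_mem _ (hT1le _ t.2), by simp [hεpos]⟩
        have hc : ‖ϖ * (t : F) - ϖ * (t' : F)‖ ≤ ‖ϖ‖ ^ k := by
          have := hm.2
          rwa [hpt_invc, hpt_invc] at this
        have hc2 : ‖(t : F) - (t' : F)‖ ≤ ‖ϖ‖ ^ (k - 1) := by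
          have hfac : ϖ * (t : F) - ϖ * (t' : F) = ϖ * ((t : F) - (t' : F)) := by ring
          rw [hfac, norm_mul, hpowsplit] at hc
          exact le_of_mul_le_mul_left hc hwpos
        have heq : (t : F) = (t' : F) := St10.sep hT1le hT1rep t.2 t'.2 hc2
        exact congrArg Sum.inr (Subtype.ext heq)
    · rintro ⟨D, z, rfl⟩
      rcases St10.dichotomy hϖ hk z with ⟨x, rfl, hx⟩ | hz
      · obtain ⟨t, ⟨htT, htc⟩, -⟩ := hTkrep x hx
        refine ⟨Sum.inl ⟨t, htT⟩, ?_⟩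
        apply Subtype.ext
        simp only [hf, Sum.elim_inl]
        rw [hfin _ (hTkle _ htT), hfin _ hx]
        ext w
        constructor
        · rintro ⟨y, rfl, hy⟩
          exact ⟨y, rfl, St10.close hy (by rwa [norm_sub_rev] at htc)⟩
        · rintro ⟨y, rfl, hy⟩
          exact ⟨y, rfl, St10.close hy htc⟩
      · have hinvz : ‖invc F z‖ ≤ ‖ϖ‖ := St10.invc_le hϖ hz
        have hdiv : ‖invc F z / ϖ‖ ≤ 1 := by
          rw [norm_div, div_le_one hwpos]; exact hinvz
        obtain ⟨t, ⟨htT, htc⟩, -⟩ := hT1rep (invc F z / ϖ) hdiv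
        have hclose : ‖invc F (pt t) - invc F z‖ ≤ ‖ϖ‖ ^ k := by
          rw [hpt_invc]
          have hfac : ϖ * t - invc F z = -(ϖ * (invc F z / ϖ - t)) := by
            field_simp
            ring
          rw [hfac, norm_neg, norm_mul, hpowsplit]
          exact mul_le_mul_of_nonneg_left htc hwpos.le
        refine ⟨Sum.inr ⟨t, htT⟩, ?_⟩
        apply Subtype.ext
        simp only [hf, Sum.elim_inr]
        rw [hinf _ (hpt_mem _ (hT1le _ htT)), hinf _ hz]
        ext w
        constructor
        · rintro ⟨hw, hwc⟩
          exact ⟨hw, St10.close hwc hclose⟩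
        · rintro ⟨hw, hwc⟩
          exact ⟨hw, St10.close hwc (by rwa [norm_sub_rev] at hclose)⟩
  have hcount := Nat.card_congr (Equiv.ofBijective f hbij)
  rw [← hcount, Nat.card_sum, Nat.card_eq_finsetCard, Nat.card_eq_finsetCard,
    hTkcard, hT1card, hscard]
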